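/- Let A ∈ ℝ^{m×d}, Y ∈ ℝ^{m×n}, λ > 0, and 1 ≤ q < 2. Let X_k ∈ ℝ^{d×n} be such that every row of AX_k − Y is nonzero. Define the diagonal matrix G_k ∈ ℝ^{m×m} with (G_k)_{ii} = 1/‖(AX_k − Y)^i‖₂^{2−q}, define Q_k(X) = Tr((AX − Y)ᵀG_k(AX − Y)) + λ·(2/q)·Tr(XᵀX), and define J(X) = Σ_{i=1}^m ‖(AX − Y)^i‖₂^q + λ·Σ_{i=1}^d ‖X^i‖₂². If X_{k+1} ∈ ℝ^{d×n} satisfies Q_k(X_{k+1}) ≤ Q_k(X_k), then J(X_{k+1}) ≤ J(X_k). -/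

import Mathlib

open Matrix

/-- Euclidean norm of the i-th row of a matrix. -/
noncomputable def rowNorm {m n : ℕ} (M : Matrix (Fin m) (Fin n) ℝ) (i : Fin m) : ℝ :=
  Real.sqrt (∑ j, M i j ^ 2)

lemma rowNorm_sq {m n : ℕ} (M : Matrix (Fin m) (Fin n) ℝ) (i : Fin m) :
    rowNorm M i ^ 2 = ∑ j, M i j ^ 2 :=
  Real.sq_sqrt (by positivity)

lemma rowNorm_pos {m n : ℕ} (M : Matrix (Fin m) (Fin n) ℝ) (i : Fin m) (h : M i ≠ 0) :
    0 < rowNorm M i := by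
  apply Real.sqrt_pos.2
  have hne : ∑ j, M i j ^ 2 ≠ 0 := by
    intro hz
    have := (Finset.sum_eq_zero_iff_of_nonneg (fun j _ => sq_nonneg (M i j))).mp hz
    exact h (funext fun j => by
      have h2 := this j (Finset.mem_univ j)
      simp only [Pi.zero_apply]
      nlinarith [sq_nonneg (M i j)])
  exact lt_of_le_of_ne (Finset.sum_nonneg fun j _ => sq_nonneg _) (Ne.symm hne)

lemma trace_tdt {m n : ℕ} (g : Fin m → ℝ) (M : Matrix (Fin m) (Fin n) ℝ) :
    Matrix.trace (Mᵀ * Matrix.diagonal g * M) = ∑ i, g i * rowNorm M i ^ 2 := by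
  rw [Matrix.mul_assoc, Matrix.trace_mul_comm]
  simp only [Matrix.trace, Matrix.diag, Matrix.diagonal_mul, Matrix.mul_apply,
    Matrix.transpose_apply]
  refine Finset.sum_congr rfl fun i _ => ?_
  rw [rowNorm_sq, Finset.mul_sum]
  refine Finset.sum_congr rfl fun j _ => ?_
  simp [Matrix.diagonal_apply, ite_mul, Finset.sum_ite_eq]
  ring

lemma trace_tt {m n : ℕ} (X : Matrix (Fin m) (Fin n) ℝ) :
    Matrix.trace (Xᵀ * X) = ∑ i, rowNorm X i ^ 2 := by
  simp only [Matrix.trace, Matrix.diag, Matrix.mul_apply, Matrix.transpose_apply]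
  rw [Finset.sum_comm]
  exact Finset.sum_congr rfl fun i _ => by
    rw [rowNorm_sq]; exact Finset.sum_congr rfl fun j _ => (sq _).symm

lemma key_ineq {a b q : ℝ} (ha : 0 ≤ a) (hb : 0 < b) (hq1 : 1 ≤ q) (hq2 : q < 2) :
    a ^ q ≤ b ^ q + q / 2 * (1 / b ^ (2 - q)) * (a ^ 2 - b ^ 2) := by
  have hbq : 0 < b ^ q := Real.rpow_pos_of_pos hb q
  have hb2 : (0:ℝ) < b ^ 2 := by positivity
  have hs : (-1:ℝ) ≤ a ^ 2 / b ^ 2 - 1 := by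
    have : 0 ≤ a ^ 2 / b ^ 2 := by positivity
    linarith
  have hber := rpow_one_add_le_one_add_mul_self hs (p := q / 2) (by linarith) (by linarith)
  have h1 : (1:ℝ) + (a ^ 2 / b ^ 2 - 1) = a ^ 2 / b ^ 2 := by ring
  rw [h1] at hber
  have h2 : (a ^ 2 / b ^ 2 : ℝ) ^ (q / 2) = a ^ q / b ^ q := by
    rw [Real.div_rpow (by positivity) hb2.le]
    congr 1
    · rw [← Real.rpow_natCast a 2, ← Real.rpow_mul ha]; congr 1; push_cast; ring
    · rw [← Real.rpow_natCast b 2, ← Real.rpow_mul hb.le]; congr 1; push_cast; ring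
  rw [h2] at hber
  have h3 : 1 / b ^ (2 - q) = b ^ q / b ^ 2 := by
    rw [Real.rpow_sub hb, one_div_div]
    rw [← Real.rpow_natCast b 2]; norm_num
  rw [h3]
  have hmul := mul_le_mul_of_nonneg_left hber hbq.le
  have he : b ^ q * (a ^ q / b ^ q) = a ^ q := by field_simp
  rw [he] at hmul
  calc a ^ q ≤ b ^ q * (1 + q / 2 * (a ^ 2 / b ^ 2 - 1)) := hmul
    _ = b ^ q + q / 2 * (b ^ q / b ^ 2) * (a ^ 2 - b ^ 2) := by field_simp

/-- One-step descent of the IQM in the case p = 2: if Q_k(X_{k+1}) ≤ Q_k(X_k)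
then J(X_{k+1}) ≤ J(X_k), for 1 ≤ q < 2. -/
theorem stmt_14 {m d n : ℕ} (A : Matrix (Fin m) (Fin d) ℝ) (Y : Matrix (Fin m) (Fin n) ℝ)
    (lam q : ℝ) (hlam : 0 < lam) (hq1 : 1 ≤ q) (hq2 : q < 2)
    (Xk Xk1 : Matrix (Fin d) (Fin n) ℝ)
    (hrowR : ∀ i, (A * Xk - Y) i ≠ 0) :
    let Gk : Matrix (Fin m) (Fin m) ℝ :=
      Matrix.diagonal (fun i => 1 / rowNorm (A * Xk - Y) i ^ (2 - q))
    let Qk : Matrix (Fin d) (Fin n) ℝ → ℝ := fun X =>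
      Matrix.trace ((A * X - Y)ᵀ * Gk * (A * X - Y)) + lam * (2 / q) * Matrix.trace (Xᵀ * X)
    let J : Matrix (Fin d) (Fin n) ℝ → ℝ := fun X =>
      ∑ i, rowNorm (A * X - Y) i ^ q + lam * ∑ i, rowNorm X i ^ 2
    Qk Xk1 ≤ Qk Xk → J Xk1 ≤ J Xk := by
  intro Gk Qk J hQ
  have hq0 : (0:ℝ) < q := lt_of_lt_of_le one_pos hq1
  have hr : ∀ i, 0 < rowNorm (A * Xk - Y) i := fun i => rowNorm_pos _ _ (hrowR i)
  set g : Fin m → ℝ := fun i => 1 / rowNorm (A * Xk - Y) i ^ (2 - q) with hg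
  simp only [Qk, Gk, trace_tdt, trace_tt] at hQ
  simp only [J]
  set T1 := ∑ i, g i * rowNorm (A * Xk1 - Y) i ^ 2 with hT1
  set T0 := ∑ i, g i * rowNorm (A * Xk - Y) i ^ 2 with hT0
  set S1 := ∑ i, rowNorm Xk1 i ^ 2 with hS1
  set S0 := ∑ i, rowNorm Xk i ^ 2 with hS0
  have hrow : ∀ i ∈ Finset.univ, rowNorm (A * Xk1 - Y) i ^ q ≤ rowNorm (A * Xk - Y) i ^ q
      + q / 2 * (g i * rowNorm (A * Xk1 - Y) i ^ 2 - g i * rowNorm (A * Xk - Y) i ^ 2) := by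
    intro i _
    have := key_ineq (Real.sqrt_nonneg _) (hr i) hq1 hq2
      (a := rowNorm (A * Xk1 - Y) i) (b := rowNorm (A * Xk - Y) i)
    calc rowNorm (A * Xk1 - Y) i ^ q ≤ _ := this
      _ = _ := by rw [hg]; ring
  have hsum := Finset.sum_le_sum hrow
  rw [Finset.sum_add_distrib, ← Finset.mul_sum, Finset.sum_sub_distrib, ← hT1, ← hT0] at hsum
  have hQ2 : T1 - T0 ≤ lam * (2 / q) * (S0 - S1) := by linarith
  have hmul := mul_le_mul_of_nonneg_left hQ2 (by linarith : (0:ℝ) ≤ q / 2)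
  have hcast : q / 2 * (lam * (2 / q) * (S0 - S1)) = lam * (S0 - S1) := by
    field_simp
  linarith
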